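/- There exists a group homomorphism ψ : G₂ → G₂ satisfying ψ(y₁) = y₁⁻¹, ψ(y₂) = y₂⁻¹, ψ(y₃) = y₃⁻¹, ψ(y₄) = y₄⁻¹, and ψ(v) = v·y₃⁻¹; that is, the substitution yᵢ ↦ yᵢ⁻¹ (i = 1, 2, 3, 4), v ↦ v·y₃⁻¹ preserves all four defining relations of G₂ and hence defines an endomorphism of G₂. -/
import Mathlib


/-- Relator words for the presentation of `G₂`: generators are indexed by `Fin 5`,
with `0,1,2,3` corresponding to `y₁,y₂,y₃,y₄` and `4` to `v`.  The relations are
`v⁻¹·yᵢ·v = wᵢ` written as relators `(v⁻¹·yᵢ·v)·wᵢ⁻¹`. -/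
def G2rels : Set (FreeGroup (Fin 5)) :=
  {((FreeGroup.of 4)⁻¹ * FreeGroup.of 0 * FreeGroup.of 4) *
      (FreeGroup.of 0 * (FreeGroup.of 3)⁻¹ * FreeGroup.of 0 * FreeGroup.of 2)⁻¹,
   ((FreeGroup.of 4)⁻¹ * FreeGroup.of 1 * FreeGroup.of 4) *
      ((FreeGroup.of 2)⁻¹ * FreeGroup.of 1 * FreeGroup.of 2 * FreeGroup.of 0 *
        FreeGroup.of 2 * FreeGroup.of 1)⁻¹,
   ((FreeGroup.of 4)⁻¹ * FreeGroup.of 2 * FreeGroup.of 4) *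
      (FreeGroup.of 1 * FreeGroup.of 2)⁻¹,
   ((FreeGroup.of 4)⁻¹ * FreeGroup.of 3 * FreeGroup.of 4) *
      ((FreeGroup.of 2)⁻¹ * (FreeGroup.of 1)⁻¹ * (FreeGroup.of 1)⁻¹)⁻¹}

/-- The group `G₂ = ⟨y₁,y₂,y₃,y₄,v ∣ v⁻¹·y₁·v = y₁·y₄⁻¹·y₁·y₃,
`v⁻¹·y₂·v = y₃⁻¹·y₂·y₃·y₁·y₃·y₂`, `v⁻¹·y₃·v = y₂·y₃`,
`v⁻¹·y₄·v = y₃⁻¹·y₂⁻¹·y₂⁻¹⟩`. -/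
abbrev G₂ : Type := PresentedGroup G2rels

def y₁ : G₂ := PresentedGroup.of 0
def y₂ : G₂ := PresentedGroup.of 1
def y₃ : G₂ := PresentedGroup.of 2
def y₄ : G₂ := PresentedGroup.of 3
def v : G₂ := PresentedGroup.of 4

lemma G2_rel_eq_one {r : FreeGroup (Fin 5)} (hr : r ∈ G2rels) :
    (QuotientGroup.mk r : G₂) = 1 :=
  (QuotientGroup.eq_one_iff r).mpr (Subgroup.subset_normalClosure hr)

lemma rel1 : v⁻¹ * y₁ * v = y₁ * y₄⁻¹ * y₁ * y₃ := by
  have h := G2_rel_eq_one (r := ((FreeGroup.of 4)⁻¹ * FreeGroup.of 0 * FreeGroup.of 4) *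
      (FreeGroup.of 0 * (FreeGroup.of 3)⁻¹ * FreeGroup.of 0 * FreeGroup.of 2)⁻¹)
    (by simp [G2rels])
  simp only [QuotientGroup.mk_mul, QuotientGroup.mk_inv] at h
  change v⁻¹ * y₁ * v * (y₁ * y₄⁻¹ * y₁ * y₃)⁻¹ = 1 at h
  group at h ⊢
  exact mul_inv_eq_one.mp h

lemma rel2 : v⁻¹ * y₂ * v = y₃⁻¹ * y₂ * y₃ * y₁ * y₃ * y₂ := by
  have h := G2_rel_eq_one (r := ((FreeGroup.of 4)⁻¹ * FreeGroup.of 1 * FreeGroup.of 4) *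
      ((FreeGroup.of 2)⁻¹ * FreeGroup.of 1 * FreeGroup.of 2 * FreeGroup.of 0 *
        FreeGroup.of 2 * FreeGroup.of 1)⁻¹)
    (by simp [G2rels])
  simp only [QuotientGroup.mk_mul, QuotientGroup.mk_inv] at h
  change v⁻¹ * y₂ * v * (y₃⁻¹ * y₂ * y₃ * y₁ * y₃ * y₂)⁻¹ = 1 at h
  exact mul_inv_eq_one.mp h

lemma rel3 : v⁻¹ * y₃ * v = y₂ * y₃ := by
  have h := G2_rel_eq_one (r := ((FreeGroup.of 4)⁻¹ * FreeGroup.of 2 * FreeGroup.of 4) *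
      (FreeGroup.of 1 * FreeGroup.of 2)⁻¹)
    (by simp [G2rels])
  simp only [QuotientGroup.mk_mul, QuotientGroup.mk_inv] at h
  change v⁻¹ * y₃ * v * (y₂ * y₃)⁻¹ = 1 at h
  exact mul_inv_eq_one.mp h

lemma rel4 : v⁻¹ * y₄ * v = y₃⁻¹ * y₂⁻¹ * y₂⁻¹ := by
  have h := G2_rel_eq_one (r := ((FreeGroup.of 4)⁻¹ * FreeGroup.of 3 * FreeGroup.of 4) *
      ((FreeGroup.of 2)⁻¹ * (FreeGroup.of 1)⁻¹ * (FreeGroup.of 1)⁻¹)⁻¹)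
    (by simp [G2rels])
  simp only [QuotientGroup.mk_mul, QuotientGroup.mk_inv] at h
  change v⁻¹ * y₄ * v * (y₃⁻¹ * y₂⁻¹ * y₂⁻¹)⁻¹ = 1 at h
  exact mul_inv_eq_one.mp h


def G2f : Fin 5 → G₂ := fun i =>
  match i with
  | 0 => y₁⁻¹ | 1 => y₂⁻¹ | 2 => y₃⁻¹ | 3 => y₄⁻¹ | 4 => v * y₃⁻¹

lemma conj_aux {a b : G₂} (h : v⁻¹ * a * v = b) :
    (v * y₃⁻¹)⁻¹ * a * (v * y₃⁻¹) = y₃ * b * y₃⁻¹ := by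
  rw [← h]; group

lemma G2f_rels : ∀ r ∈ G2rels, FreeGroup.lift G2f r = 1 := by
  intro r hr
  have e1 : v⁻¹ * y₁⁻¹ * v = (y₁ * y₄⁻¹ * y₁ * y₃)⁻¹ := by
    rw [(by group : v⁻¹ * y₁⁻¹ * v = (v⁻¹ * y₁ * v)⁻¹), rel1]
  have e2 : v⁻¹ * y₂⁻¹ * v = (y₃⁻¹ * y₂ * y₃ * y₁ * y₃ * y₂)⁻¹ := by
    rw [(by group : v⁻¹ * y₂⁻¹ * v = (v⁻¹ * y₂ * v)⁻¹), rel2]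
  have e3 : v⁻¹ * y₃⁻¹ * v = (y₂ * y₃)⁻¹ := by
    rw [(by group : v⁻¹ * y₃⁻¹ * v = (v⁻¹ * y₃ * v)⁻¹), rel3]
  have e4 : v⁻¹ * y₄⁻¹ * v = (y₃⁻¹ * y₂⁻¹ * y₂⁻¹)⁻¹ := by
    rw [(by group : v⁻¹ * y₄⁻¹ * v = (v⁻¹ * y₄ * v)⁻¹), rel4]
  rcases hr with h | h | h | h <;> subst h <;>
      simp only [map_mul, map_inv, FreeGroup.lift_apply_of] <;>
      rw [mul_inv_eq_one] <;>
      show (v * y₃⁻¹)⁻¹ * _ * (v * y₃⁻¹) = _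
  · show (v * y₃⁻¹)⁻¹ * y₁⁻¹ * (v * y₃⁻¹) = y₁⁻¹ * y₄⁻¹⁻¹ * y₁⁻¹ * y₃⁻¹
    rw [conj_aux e1]; group
  · show (v * y₃⁻¹)⁻¹ * y₂⁻¹ * (v * y₃⁻¹) = y₃⁻¹⁻¹ * y₂⁻¹ * y₃⁻¹ * y₁⁻¹ * y₃⁻¹ * y₂⁻¹
    rw [conj_aux e2]; group
  · show (v * y₃⁻¹)⁻¹ * y₃⁻¹ * (v * y₃⁻¹) = y₂⁻¹ * y₃⁻¹
    rw [conj_aux e3]; group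
  · show (v * y₃⁻¹)⁻¹ * y₄⁻¹ * (v * y₃⁻¹) = y₃⁻¹⁻¹ * y₂⁻¹⁻¹ * y₂⁻¹⁻¹
    rw [conj_aux e4]; group; rw [zpow_two, mul_assoc]

/-- There exists an endomorphism of `G₂` sending `yᵢ ↦ yᵢ⁻¹` and `v ↦ v·y₃⁻¹`. -/
theorem G2_exists_hom :
    ∃ ψ : G₂ →* G₂,
      ψ y₁ = y₁⁻¹ ∧ ψ y₂ = y₂⁻¹ ∧ ψ y₃ = y₃⁻¹ ∧ ψ y₄ = y₄⁻¹ ∧ ψ v = v * y₃⁻¹ := by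
  exact ⟨PresentedGroup.toGroup G2f_rels,
    PresentedGroup.toGroup.of _, PresentedGroup.toGroup.of _, PresentedGroup.toGroup.of _,
    PresentedGroup.toGroup.of _, PresentedGroup.toGroup.of _⟩
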